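/- The number of monotone lattice paths from (0,0) to (n,n) with area ≡ 0 mod n whose last step is an up-step equals the number of such paths whose last step is a right-step, and each equals T_n. -/

import Mathlib

open Finset Filter Topology

noncomputable section

/-- number of size-`k` submultisets of `{0,…,n-1}` whose sum is ≡ 0 mod `n` -/
def symCount (n k : ℕ) : ℕ :=
  Nat.card {s : Sym (Fin n) k // ((s : Multiset (Fin n)).map Fin.val).sum % n = 0}

/-- `T n`: number of size-`n` submultisets of `{0,…,n-1}` summing to `0` mod `n`
(= number of rooted unlabelled cyclically distinct plane trees with `n` edges). -/
def planeTreeT (n : ℕ) : ℕ := symCount n n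

/-- Walkup's formula expression `(1/n) ∑_{d ∣ n} C(2d-1, d) φ(n/d)` (exact division). -/
def walkupT (n : ℕ) : ℕ :=
  (∑ d ∈ n.divisors, Nat.choose (2 * d - 1) d * Nat.totient (n / d)) / n

/-- number of up-steps strictly before position `i` in a monotone lattice path
encoded by `f : Fin m → Bool` (`true` = up-step, `false` = right-step). -/
def upsBefore {m : ℕ} (f : Fin m → Bool) (i : Fin m) : ℕ :=
  Nat.card {j : Fin m // j < i ∧ f j = true}

/-- area below/right of a monotone lattice path: sum over right-steps of the
number of up-steps before them. -/
def pathArea {m : ℕ} (f : Fin m → Bool) : ℕ :=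
  ∑ i : Fin m, if f i = false then upsBefore f i else 0

/-- number of up-steps of a monotone lattice path. -/
def upCount {m : ℕ} (f : Fin m → Bool) : ℕ := Nat.card {i : Fin m // f i = true}

/-- the `m`-th increment (`±1`) of a walk of length `2n` encoded by
`ε : Fin (2n) → Bool` (`true` = `+1`); `0` out of range. -/
def stepVal (n : ℕ) (ε : Fin (2 * n) → Bool) (m : ℕ) : ℤ :=
  if h : m < 2 * n then (if ε ⟨m, h⟩ then 1 else -1) else 0

/-- position of the walk after `k` steps. -/
def wpos (n : ℕ) (ε : Fin (2 * n) → Bool) (k : ℕ) : ℤ :=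
  ∑ i ∈ Finset.range k, stepVal n ε i

/-- a walk of length `2n` is a bridge if it returns to `0`. -/
def IsBridge (n : ℕ) (ε : Fin (2 * n) → Bool) : Prop := wpos n ε (2 * n) = 0

/-- partial diamond area `σ_{2k} = (1/2) ∑_{i=1}^k B_{2i}` (the division is exact). -/
def psig (n : ℕ) (ε : Fin (2 * n) → Bool) (k : ℕ) : ℤ :=
  (∑ i ∈ Finset.range k, wpos n ε (2 * (i + 1))) / 2

/-- diamond area `σ(B) = (1/2) ∑_{i=1}^n B_{2i}`. -/
def dsigma (n : ℕ) (ε : Fin (2 * n) → Bool) : ℤ := psig n ε n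

/-- a bridge is graphical if `σ(B) = 0` and `σ_{2k} ≥ 0` for all `1 ≤ k < n`. -/
def IsGraphical (n : ℕ) (ε : Fin (2 * n) → Bool) : Prop :=
  IsBridge n ε ∧ dsigma n ε = 0 ∧ ∀ k, 1 ≤ k → k < n → 0 ≤ psig n ε k

/-- `B_n`: the number of graphical bridges of length `2n`. -/
def graphicalCount (n : ℕ) : ℕ := Nat.card {ε : Fin (2 * n) → Bool // IsGraphical n ε}

namespace LP
variable {m n : ℕ}

lemma upCount_eq (f : Fin m → Bool) :
    upCount f = (univ.filter fun i => f i = true).card := by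
  rw [upCount, Nat.card_eq_fintype_card, Fintype.card_subtype]

lemma upsBefore_eq (f : Fin m → Bool) (i : Fin m) :
    upsBefore f i = (univ.filter fun j => j < i ∧ f j = true).card := by
  rw [upsBefore, Nat.card_eq_fintype_card, Fintype.card_subtype]

lemma card_filter_lt (b : Fin m) : (univ.filter fun j => j < b).card = b.val := by
  rw [show (univ.filter fun j => j < b) = Iio b by ext j; simp [mem_Iio], Fin.card_Iio]

lemma up_add_right (f : Fin m → Bool) :
    (univ.filter fun i => f i = true).card + (univ.filter fun i => f i = false).card = m := by
  classical
  have h := Finset.card_filter_add_card_filter_not (s := (univ : Finset (Fin m)))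
    (p := fun i => f i = true)
  simp only [Bool.not_eq_true] at h
  simpa using h

lemma pathArea_eq_sum (f : Fin m → Bool) :
    pathArea f = ∑ i ∈ univ.filter (fun i => f i = false),
      ((univ.filter fun j => f j = true).filter fun j => j < i).card := by
  rw [pathArea, ← Finset.sum_filter]
  refine Finset.sum_congr rfl fun i _ => ?_
  rw [upsBefore_eq, Finset.filter_filter]
  congr 1
  ext j
  simp [and_comm]

lemma double_count (U V : Finset (Fin m)) (hd : ∀ i ∈ U, ∀ j ∈ V, i ≠ j) :
    (∑ i ∈ V, (U.filter fun j => j < i).card) + (∑ i ∈ U, (V.filter fun j => j < i).card)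
      = U.card * V.card := by
  have h : ∀ (W : Finset (Fin m)) (i : Fin m), (W.filter fun j => j < i).card
      = ∑ j ∈ W, if j < i then 1 else 0 := fun W i => by
    rw [Finset.card_filter]
  simp only [h]
  rw [Finset.sum_comm (s := U) (t := V)]
  rw [← Finset.sum_add_distrib]
  have : ∀ i ∈ V, (∑ j ∈ U, if j < i then 1 else 0) + (∑ j ∈ U, if i < j then 1 else 0)
      = U.card := by
    intro i hi
    rw [← Finset.sum_add_distrib, Finset.card_eq_sum_ones]
    refine Finset.sum_congr rfl fun j hj => ?_
    have := hd j hj i hi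
    rcases lt_trichotomy j i with h1 | h1 | h1 <;> simp [h1, this] <;> omega
  rw [Finset.sum_congr rfl this, Finset.sum_const, smul_eq_mul, mul_comm]

lemma area_compl (f : Fin (2*n) → Bool) (hu : upCount f = n) :
    pathArea f + pathArea (fun i => !f i) = n * n := by
  have hU : (univ.filter fun i => f i = true).card = n := (upCount_eq f).symm.trans hu
  have hV : (univ.filter fun i => f i = false).card = n := by
    have := up_add_right f; omega
  have h1 := pathArea_eq_sum f
  have h2 := pathArea_eq_sum (fun i => !f i)
  simp only [Bool.not_eq_false', Bool.not_eq_true'] at h2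
  have hd := double_count (m := 2*n) (univ.filter fun i => f i = true)
    (univ.filter fun i => f i = false) ?_
  · rw [hU, hV] at hd
    rw [h1, h2]
    exact hd
  · intro i hi j hj hij
    simp only [mem_filter] at hi hj
    rw [hij] at hi; rw [hi.2] at hj; simp at hj

lemma upCount_compl (f : Fin (2*n) → Bool) (hu : upCount f = n) :
    upCount (fun i => !f i) = n := by
  rw [upCount_eq] at hu ⊢
  simp only [Bool.not_eq_true']
  have := up_add_right f
  omega

lemma mod_compl (f : Fin (2*n) → Bool) (hu : upCount f = n)
    (ha : pathArea f % n = 0) : pathArea (fun i => !f i) % n = 0 := by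
  have h := area_compl f hu
  have h2 : (pathArea f + pathArea (fun i => !f i)) % n = 0 := by
    rw [h, Nat.mul_mod_left]
  rwa [Nat.add_mod, ha, Nat.zero_add, Nat.mod_mod_of_dvd _ dvd_rfl] at h2

/-- Part 1 equivalence. -/
def complEquiv (n : ℕ) (hn : 0 < n) :
    {f : Fin (2 * n) → Bool //
        upCount f = n ∧ pathArea f % n = 0 ∧ f ⟨2 * n - 1, Nat.sub_lt (by omega) Nat.one_pos⟩ = true} ≃
    {f : Fin (2 * n) → Bool //
        upCount f = n ∧ pathArea f % n = 0 ∧ f ⟨2 * n - 1, Nat.sub_lt (by omega) Nat.one_pos⟩ = false} where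
  toFun := fun ⟨f, h1, h2, h3⟩ => ⟨fun i => !f i, upCount_compl f h1, mod_compl f h1 h2,
    by simp [h3]⟩
  invFun := fun ⟨f, h1, h2, h3⟩ => ⟨fun i => !f i, upCount_compl f h1, mod_compl f h1 h2,
    by simp [h3]⟩
  left_inv := fun ⟨f, h1, h2, h3⟩ => by simp
  right_inv := fun ⟨f, h1, h2, h3⟩ => by simp

/-! Part 2: paths ending in up ↔ monotone functions ↔ Sym -/

def q (g : Fin n → Fin n) (i : Fin n) : Fin (2*n) :=
  ⟨g i + i, by have := (g i).isLt; have := i.isLt; omega⟩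

lemma q_strictMono {g : Fin n → Fin n} (hg : Monotone g) : StrictMono (q g) := by
  intro i j hij
  have h1 : (g i : ℕ) ≤ g j := hg hij.le
  have : (q g i : ℕ) < q g j := by simp only [q]; omega
  exact this

def Phi (g : Fin n → Fin n) : Fin (2*n) → Bool := fun m => !decide (∃ i, q g i = m)

lemma filter_Phi_false (g : Fin n → Fin n) :
    univ.filter (fun m => Phi g m = false) = univ.image (q g) := by
  ext m; simp [Phi]

lemma upCount_Phi {g : Fin n → Fin n} (hg : Monotone g) : upCount (Phi g) = n := by
  rw [upCount_eq]
  have h := up_add_right (Phi g)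
  rw [filter_Phi_false, Finset.card_image_of_injective _ (q_strictMono hg).injective,
    card_univ, Fintype.card_fin] at h
  omega

lemma Phi_last (hn : 0 < n) (g : Fin n → Fin n) :
    Phi g ⟨2*n-1, Nat.sub_lt (by omega) Nat.one_pos⟩ = true := by
  have h : ∀ i : Fin n, ¬ (q g i = (⟨2*n-1, Nat.sub_lt (by omega) Nat.one_pos⟩ : Fin (2*n))) := by
    intro i hi
    have := congrArg Fin.val hi
    simp only [q] at this
    have := (g i).isLt; have := i.isLt
    omega
  simp [Phi, h]

lemma filter_lt_q {g : Fin n → Fin n} (hg : Monotone g) (i : Fin n) :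
    (univ.filter fun j => j < q g i ∧ Phi g j = false).card = i.val := by
  have he : (univ.filter fun j => j < q g i ∧ Phi g j = false)
      = (univ.filter fun k => k < i).image (q g) := by
    ext j
    simp only [mem_filter, mem_univ, true_and, mem_image, Phi, Bool.not_eq_false',
      decide_eq_true_eq]
    constructor
    · rintro ⟨hlt, k, hk⟩
      exact ⟨k, (q_strictMono hg).lt_iff_lt.mp (hk ▸ hlt), hk⟩
    · rintro ⟨k, hki, rfl⟩
      exact ⟨(q_strictMono hg) hki, k, rfl⟩
  rw [he, Finset.card_image_of_injective _ (q_strictMono hg).injective, card_filter_lt]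

lemma split_three (f : Fin m → Bool) (b : Fin m) :
    (univ.filter fun j => j < b ∧ f j = true).card
      + (univ.filter fun j => j < b ∧ f j = false).card = b.val := by
  classical
  have h := Finset.card_filter_add_card_filter_not
    (s := univ.filter fun j : Fin m => j < b) (p := fun j => f j = true)
  simp only [Finset.filter_filter, Bool.not_eq_true] at h
  rw [card_filter_lt] at h
  rw [show (univ.filter fun j => j < b ∧ f j = true)
      = univ.filter (fun j => j < b ∧ f j = true) from rfl] at h ⊢
  convert h using 2

lemma upsBefore_q {g : Fin n → Fin n} (hg : Monotone g) (i : Fin n) :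
    upsBefore (Phi g) (q g i) = g i := by
  have h := split_three (Phi g) (q g i)
  rw [filter_lt_q hg] at h
  rw [upsBefore_eq]
  have : (q g i : ℕ) = g i + i := rfl
  omega

lemma pathArea_Phi {g : Fin n → Fin n} (hg : Monotone g) :
    pathArea (Phi g) = ∑ i, (g i : ℕ) := by
  rw [pathArea, ← Finset.sum_filter, filter_Phi_false,
    Finset.sum_image (fun a _ b _ h => (q_strictMono hg).injective h)]
  exact Finset.sum_congr rfl fun i _ => upsBefore_q hg i

section Surj
variable {f : Fin (2*n) → Bool} (hu : upCount f = n)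

lemma rights_card (hu : upCount f = n) :
    (univ.filter fun i => f i = false).card = n := by
  have h := up_add_right f
  rw [upCount_eq] at hu
  omega

lemma mem_rights_iff (hu : upCount f = n) (j : Fin (2*n)) :
    f j = false ↔ ∃ k, (univ.filter fun i => f i = false).orderEmbOfFin (rights_card hu) k = j := by
  have h := Finset.range_orderEmbOfFin (univ.filter fun i => f i = false) (rights_card hu)
  constructor
  · intro hj
    have : j ∈ Set.range ((univ.filter fun i => f i = false).orderEmbOfFin (rights_card hu)) := by
      rw [h]; simp [hj]
    exact this
  · rintro ⟨k, rfl⟩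
    have := Finset.orderEmbOfFin_mem (univ.filter fun i => f i = false) (rights_card hu) k
    exact (Finset.mem_filter.mp this).2

lemma rank_e (hu : upCount f = n) (i : Fin n) :
    (univ.filter fun j => j < (univ.filter fun i => f i = false).orderEmbOfFin (rights_card hu) i
      ∧ f j = false).card = i.val := by
  set e := (univ.filter fun i => f i = false).orderEmbOfFin (rights_card hu) with he
  have hmono : StrictMono e := (Finset.orderEmbOfFin _ _).strictMono
  have heq : (univ.filter fun j => j < e i ∧ f j = false)
      = (univ.filter fun k => k < i).image e := by
    ext j
    simp only [mem_filter, mem_univ, true_and, mem_image]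
    constructor
    · rintro ⟨hlt, hj⟩
      obtain ⟨k, rfl⟩ := (mem_rights_iff hu j).mp hj
      exact ⟨k, hmono.lt_iff_lt.mp hlt, rfl⟩
    · rintro ⟨k, hki, rfl⟩
      exact ⟨hmono hki, (mem_rights_iff hu (e k)).mpr ⟨k, rfl⟩⟩
  rw [heq, Finset.card_image_of_injective _ hmono.injective, card_filter_lt]

lemma val_e (hu : upCount f = n) (i : Fin n) :
    ((univ.filter fun i => f i = false).orderEmbOfFin (rights_card hu) i : ℕ)
      = upsBefore f ((univ.filter fun i => f i = false).orderEmbOfFin (rights_card hu) i) + i := by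
  have h1 := split_three f ((univ.filter fun i => f i = false).orderEmbOfFin (rights_card hu) i)
  have h2 := rank_e hu i
  rw [upsBefore_eq]
  omega

lemma ups_lt (hn : 0 < n) (hu : upCount f = n)
    (hlast : f ⟨2*n-1, Nat.sub_lt (by omega) Nat.one_pos⟩ = true) (b : Fin (2*n)) :
    upsBefore f b < n := by
  rw [upsBefore_eq]
  have hsub : (univ.filter fun j => j < b ∧ f j = true)
      ⊆ (univ.filter fun i => f i = true).erase ⟨2*n-1, Nat.sub_lt (by omega) Nat.one_pos⟩ := by
    intro j hj
    simp only [mem_filter, mem_univ, true_and] at hj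
    rw [Finset.mem_erase]
    refine ⟨?_, by simp [hj.2]⟩
    intro hje
    have hb := b.isLt
    have := hj.1
    rw [hje] at this
    have := (Fin.lt_iff_val_lt_val).mp this
    simp at this
    omega
  have hcard := Finset.card_le_card hsub
  rw [Finset.card_erase_of_mem (by simp [hlast])] at hcard
  rw [upCount_eq] at hu
  omega

def Psi (hn : 0 < n) (hu : upCount f = n) (hlast : f ⟨2*n-1, Nat.sub_lt (by omega) Nat.one_pos⟩ = true) :
    Fin n → Fin n := fun i =>
  ⟨upsBefore f ((univ.filter fun i => f i = false).orderEmbOfFin (rights_card hu) i),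
    ups_lt hn hu hlast _⟩

lemma Psi_monotone (hn : 0 < n) (hu : upCount f = n)
    (hlast : f ⟨2*n-1, Nat.sub_lt (by omega) Nat.one_pos⟩ = true) : Monotone (Psi hn hu hlast) := by
  intro i j hij
  have he : (univ.filter fun i => f i = false).orderEmbOfFin (rights_card hu) i
      ≤ (univ.filter fun i => f i = false).orderEmbOfFin (rights_card hu) j :=
    (Finset.orderEmbOfFin _ _).monotone hij
  show upsBefore f _ ≤ upsBefore f _
  rw [upsBefore_eq, upsBefore_eq]
  apply Finset.card_le_card
  intro x hx
  simp only [mem_filter, mem_univ, true_and] at hx ⊢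
  exact ⟨lt_of_lt_of_le hx.1 he, hx.2⟩

lemma q_Psi (hn : 0 < n) (hu : upCount f = n) (hlast : f ⟨2*n-1, Nat.sub_lt (by omega) Nat.one_pos⟩ = true) (i : Fin n) :
    q (Psi hn hu hlast) i = (univ.filter fun i => f i = false).orderEmbOfFin (rights_card hu) i := by
  apply Fin.ext
  have := val_e hu i
  simp only [q, Psi]
  omega

lemma Phi_Psi (hn : 0 < n) (hu : upCount f = n) (hlast : f ⟨2*n-1, Nat.sub_lt (by omega) Nat.one_pos⟩ = true) :
    Phi (Psi hn hu hlast) = f := by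
  funext m
  have hiff : (Phi (Psi hn hu hlast) m = false) ↔ (f m = false) := by
    rw [show (Phi (Psi hn hu hlast) m = false) ↔ ∃ i, q (Psi hn hu hlast) i = m by
      simp [Phi]]
    rw [mem_rights_iff hu m]
    constructor
    · rintro ⟨i, hi⟩; exact ⟨i, by rw [← q_Psi hn hu hlast i]; exact hi⟩
    · rintro ⟨i, hi⟩; exact ⟨i, by rw [q_Psi hn hu hlast i]; exact hi⟩
  cases hP : Phi (Psi hn hu hlast) m <;> cases hf : f m <;> simp_all

end Surj

/-- the equivalence between monotone functions and paths ending in up. -/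
def pathEquiv (hn : 0 < n) :
    {g : Fin n → Fin n // Monotone g} ≃
    {f : Fin (2*n) → Bool // upCount f = n ∧ f ⟨2*n-1, Nat.sub_lt (by omega) Nat.one_pos⟩ = true} :=
  Equiv.ofBijective (fun g => ⟨Phi g.1, upCount_Phi g.2, Phi_last hn g.1⟩) <| by
    constructor
    · rintro ⟨g, hg⟩ ⟨g', hg'⟩ h
      simp only [Subtype.mk.injEq] at h ⊢
      have himg : Set.range (q g) = Set.range (q g') := by
        have := filter_Phi_false g
        have h2 := filter_Phi_false g'
        rw [h] at this
        rw [h2] at this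
        have := congrArg (fun (s : Finset (Fin (2*n))) => (s : Set (Fin (2*n)))) this
        simpa [Set.image_univ] using this.symm
      haveI : WellFoundedLT (Fin n) := inferInstance
      have hq : q g = q g' := ((q_strictMono hg).range_inj (q_strictMono hg')).mp himg
      funext i
      have := congrArg (fun h => (h i : ℕ)) hq
      simp only [q] at this
      exact Fin.ext (by omega)
    · rintro ⟨f, hu, hlast⟩
      exact ⟨⟨Psi hn hu hlast, Psi_monotone hn hu hlast⟩,
        Subtype.ext (Phi_Psi hn hu hlast)⟩

/-! Sym ≃ monotone functions -/

lemma ofFn_get_cast {α : Type*} {l : List α} {k : ℕ} (hl : l.length = k) :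
    List.ofFn (fun i : Fin k => l.get (Fin.cast hl.symm i)) = l := by
  subst hl
  simp [List.ofFn_get]

lemma msetFun_eq (g : Fin n → Fin n) :
    Multiset.map g Finset.univ.val = (List.ofFn g : Multiset (Fin n)) := by
  rw [Fin.univ_def]
  show Multiset.map g ↑(List.finRange n) = _
  rw [List.ofFn_eq_map]
  simp

def symEquiv : {g : Fin n → Fin n // Monotone g} ≃ Sym (Fin n) n :=
  Equiv.ofBijective (fun g => ⟨Multiset.map g.1 Finset.univ.val, by
    simp [Fin.univ_def]⟩) <| by
    constructor
    · rintro ⟨g, hg⟩ ⟨g', hg'⟩ h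
      have h2 : Multiset.map g Finset.univ.val = Multiset.map g' Finset.univ.val :=
        congrArg Sym.toMultiset h
      rw [msetFun_eq, msetFun_eq] at h2
      have hperm : List.Perm (List.ofFn g) (List.ofFn g') := Multiset.coe_eq_coe.mp h2
      have := List.Perm.eq_of_sortedLE hg.sortedLE_ofFn hg'.sortedLE_ofFn hperm
      exact Subtype.ext (List.ofFn_injective this)
    · rintro ⟨s, hs⟩
      have hl : (Multiset.sort s (· ≤ ·)).length = n := by
        rw [Multiset.length_sort]; exact hs
      set l := Multiset.sort s (· ≤ ·) with hldef
      have hsort : l.Pairwise (· ≤ ·) := by apply Multiset.pairwise_sort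
      refine ⟨⟨fun i => l.get (Fin.cast hl.symm i), ?_⟩, ?_⟩
      · intro i j hij
        rcases eq_or_lt_of_le hij with rfl | hlt
        · exact le_refl _
        · exact hsort.rel_get_of_le (by simpa using hij)
      · apply Subtype.ext
        show Multiset.map (fun i => l.get (Fin.cast hl.symm i)) Finset.univ.val = s
        rw [msetFun_eq, ofFn_get_cast hl]
        apply Multiset.sort_eq

lemma sum_symEquiv (g : {g : Fin n → Fin n // Monotone g}) :
    (((symEquiv g : Sym (Fin n) n) : Multiset (Fin n)).map Fin.val).sum
      = ∑ i, (g.1 i : ℕ) := by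
  show ((Multiset.map g.1 Finset.univ.val).map Fin.val).sum = _
  rw [Multiset.map_map]
  rfl

end LP

theorem lattice_paths_last_step (n : ℕ) (hn : 0 < n) :
    Nat.card {f : Fin (2 * n) → Bool //
        upCount f = n ∧ pathArea f % n = 0 ∧ f ⟨2 * n - 1, by omega⟩ = true} =
      Nat.card {f : Fin (2 * n) → Bool //
        upCount f = n ∧ pathArea f % n = 0 ∧ f ⟨2 * n - 1, by omega⟩ = false} ∧
    Nat.card {f : Fin (2 * n) → Bool //
        upCount f = n ∧ pathArea f % n = 0 ∧ f ⟨2 * n - 1, by omega⟩ = true} =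
      planeTreeT n := by
  constructor
  · exact Nat.card_congr (LP.complEquiv n hn)
  · rw [planeTreeT, symCount]
    have eA : {f : Fin (2 * n) → Bool //
        upCount f = n ∧ pathArea f % n = 0 ∧ f ⟨2 * n - 1, by omega⟩ = true} ≃
        {x : {f : Fin (2*n) → Bool // upCount f = n ∧ f ⟨2*n-1, by omega⟩ = true} //
          pathArea x.1 % n = 0} :=
      { toFun := fun ⟨f, h⟩ => ⟨⟨f, h.1, h.2.2⟩, h.2.1⟩
        invFun := fun ⟨⟨f, h1, h3⟩, h2⟩ => ⟨f, h1, h2, h3⟩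
        left_inv := fun ⟨f, h⟩ => rfl
        right_inv := fun ⟨⟨f, h1, h3⟩, h2⟩ => rfl }
    have hP : ∀ g : {g : Fin n → Fin n // Monotone g},
        ((∑ i, (g.1 i : ℕ)) % n = 0) ↔ pathArea ((LP.pathEquiv hn) g).1 % n = 0 := by
      intro g
      rw [show ((LP.pathEquiv hn) g).1 = LP.Phi g.1 from rfl, LP.pathArea_Phi g.2]
    have hQ : ∀ g : {g : Fin n → Fin n // Monotone g},
        ((∑ i, (g.1 i : ℕ)) % n = 0) ↔
          (((LP.symEquiv g : Sym (Fin n) n) : Multiset (Fin n)).map Fin.val).sum % n = 0 := by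
      intro g
      rw [LP.sum_symEquiv]
    exact Nat.card_congr <| eA.trans <|
      ((Equiv.subtypeEquiv (LP.pathEquiv hn) hP).symm.trans
        (Equiv.subtypeEquiv LP.symEquiv hQ))
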